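/- arXiv:1107.2776 — 7 statements merged into one kernel-verified Lean document; each statement's English description precedes it below -/
import Mathlib

section
/- The polynomial X^5 + 11X^4 + 33X^3 - 121X - 121 divides the 11-division polynomial of the elliptic curve Y^2 + 11Y = X^3 + 11X^2 + 33X. -/
open Polynomial

set_option maxHeartbeats 4000000

noncomputable def cuspQuot : ℚ[X] :=
  11 * X ^ 55 + 2299 * X ^ 54 + 215622 * X ^ 53 + 12479456 * X ^ 52 + 510897695 * X ^ 51 + 16023300733 * X ^ 50 + 407772113144 * X ^ 49 + 8849756798377 * X ^ 48 + 171770186075312 * X ^ 47 + 3109219406878178 * X ^ 46 + 53823708149117709 * X ^ 45 + 892197660944270538 * X ^ 44 + 13937389450681066876 * X ^ 43 + 201225496317327905104 * X ^ 42 + 2647005792428266488417 * X ^ 41 + 31484400148504337186097 * X ^ 40 + 337736435816449858047288 * X ^ 39 + 3268688723133719028791219 * X ^ 38 + 28597331977271190488398747 * X ^ 37 + 226764778102322794214187538 * X ^ 36 + 1634407485663608935953878204 * X ^ 35 + 10737557135814001008402174332 * X ^ 34 + 64472434497335839020458945456 * X ^ 33 + 354684647786635722410093089719 * X ^ 32 +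 1791800962343403178975884126336 * X ^ 31 + 8329029125300822648142442907821 * X ^ 30 + 35688734093349824311712722123905 * X ^ 29 + 141178743857816384046644785899739 * X ^ 28 + 516260423215036125313878817654797 * X ^ 27 + 1746927803602432240983599452063127 * X ^ 26 + 5474081462550424825157871478681699 * X ^ 25 + 15891738381273095281251511854239828 * X ^ 24 + 42747466675349180714890726379051269 * X ^ 23 + 106521119936132224893003111513154418 * X ^ 22 + 245753359214366291137611812325214313 * X ^ 21 + 524434184262035272152055215108476312 * X ^ 20 + 1033786290500325301501620087354468297 * X ^ 19 + 1879162058833685763864966428173676384 * X ^ 18 + 3143075930286237095889880024020156668 * X ^ 17 + 4824749840834433568012933007056185400 * X ^ 16 + 6776274187058846956111488314308442619 * X ^ 15 + 8676500184111454145126610905479087172 * X ^ 14 + 10086043236881885276985729559493486211 * X ^ 13 + 10592667110354431520778122660887020251 * X ^ 12 + 9993605590544458593245992282322392533 * X ^ 11 + 8412915652483959842256475886990068818 * X ^ 10 + 6268731881419516370498646780062444130 * X ^ 9 + 4094200804622791497702544622796585000 * X ^ 8 + 2315477733715082167707809904014420119 * X ^ 7 + 1116567557591130263873724640971983226 * X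 ^ 6 + 449870920192487212310636065974559313 * X ^ 5 + 147287454802977076691622273657250766 * X ^ 4 + 37631477947037443122688632430253982 * X ^ 3 + 7037012252188843123336478898960557 * X ^ 2 + 856462810536498950949758144577059 * X + 50906107445594229615299650620593

theorem cusp_polynomial_dvd_eleven_division_polynomial :
    (X ^ 5 + 11 * X ^ 4 + 33 * X ^ 3 - 121 * X - 121 : ℚ[X]) ∣
      (WeierstrassCurve.mk 0 11 11 33 0 : WeierstrassCurve ℚ).preΨ 11 := by
  set W : WeierstrassCurve ℚ := WeierstrassCurve.mk 0 11 11 33 0 with hW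
  have hA : W.Ψ₂Sq = 4 * X ^ 3 + 44 * X ^ 2 + 132 * X + 121 := by
    simp only [WeierstrassCurve.Ψ₂Sq, WeierstrassCurve.b₂, WeierstrassCurve.b₄,
      WeierstrassCurve.b₆, hW]
    norm_num [map_ofNat]
    try ring1
  have hB : W.Ψ₃ = 3 * X ^ 4 + 44 * X ^ 3 + 198 * X ^ 2 + 363 * X + 242 := by
    simp only [WeierstrassCurve.Ψ₃, WeierstrassCurve.b₂, WeierstrassCurve.b₄,
      WeierstrassCurve.b₆, WeierstrassCurve.b₈, hW]
    norm_num [map_ofNat]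
    try ring1
  have hC : W.preΨ₄ = 2 * X ^ 6 + 44 * X ^ 5 + 330 * X ^ 4 + 1210 * X ^ 3 + 2420 * X ^ 2 +
      2662 * X + 1331 := by
    simp only [WeierstrassCurve.preΨ₄, WeierstrassCurve.b₂, WeierstrassCurve.b₄,
      WeierstrassCurve.b₆, WeierstrassCurve.b₈, hW]
    norm_num [map_ofNat]
    try ring1
  have h5 : W.preΨ' 5 = 5 * X ^ 12 + 220 * X ^ 11 + 3982 * X ^ 10 + 40535 * X ^ 9 + 264990 * X ^ 8 + 1197900 * X ^ 7 + 3933105 * X ^ 6 + 9721624 * X ^ 5 + 18447660 * X ^ 4 + 26573415 * X ^ 3 + 27378670 * X ^ 2 + 17715610 * X + 5314683 := by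
    have h := W.preΨ'_odd 0
    norm_num at h
    rw [h, hA, hB, hC]
    ring1
  have h6 : W.preΨ' 6 = 3 * X ^ 16 + 176 * X ^ 15 + 4312 * X ^ 14 + 60984 * X ^ 13 + 572572 * X ^ 12 + 3875872 * X ^ 11 + 20124720 * X ^ 10 + 84683544 * X ^ 9 + 302043830 * X ^ 8 + 929586372 * X ^ 7 + 2421562836 * X ^ 6 + 5109181924 * X ^ 5 + 8296220163 * X ^ 4 + 9821534184 * X ^ 3 + 7911791426 * X ^ 2 + 3858459858 * X + 857435524 := by
    have h := W.preΨ'_even 0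
    norm_num at h
    rw [h, h5, hB, hC]
    ring1
  have h7 : W.preΨ' 7 = 7 * X ^ 24 + 616 * X ^ 23 + 23716 * X ^ 22 + 547162 * X ^ 21 + 8652952 * X ^ 20 + 101406228 * X ^ 19 + 930982591 * X ^ 18 + 7019129656 * X ^ 17 + 45405225558 * X ^ 16 + 261379975164 * X ^ 15 + 1364742308776 * X ^ 14 + 6437073187160 * X ^ 13 + 26885036123022 * X ^ 12 + 97134427438972 * X ^ 11 + 297775548259574 * X ^ 10 + 763543118738785 * X ^ 9 + 1619049627168666 * X ^ 8 + 2808070473421136 * X ^ 7 + 3932731351806642 * X ^ 6 + 4372012290744560 * X ^ 5 + 3764505931739938 * X ^ 4 + 2418587031769447 * X ^ 3 + 1090461205075242 * X ^ 2 + 307565980918658 * X + 40799568897373 := by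
    have h := W.preΨ'_odd 1
    norm_num at h
    rw [h, h5, hA, hB, hC]
    ring1
  have h11 : W.preΨ (11 : ℤ) = W.preΨ' 11 := by
    exact_mod_cast W.preΨ_ofNat 11
  have h11' : W.preΨ' 11 =
      W.preΨ' 7 * W.preΨ' 5 ^ 3 - W.preΨ₄ * W.preΨ' 6 ^ 3 * W.Ψ₂Sq ^ 2 := by
    have h := W.preΨ'_odd 3
    norm_num at h
    exact h
  refine ⟨cuspQuot, ?_⟩
  rw [h11, h11', h7, h6, h5, hA, hC, cuspQuot]
  ring1
end

section
/- The polynomial X^5 + 11X^4 + 33X^3 - 121X - 121 has five distinct real roots. -/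
private noncomputable def cuspF : ℝ → ℝ :=
  fun x => x ^ 5 + 11 * x ^ 4 + 33 * x ^ 3 - 121 * x - 121

private lemma cuspF_cont : Continuous cuspF := by
  unfold cuspF; continuity

private lemma cusp_ivt_up {a b : ℝ} (hab : a ≤ b) (ha : cuspF a < 0) (hb : 0 < cuspF b) :
    ∃ x ∈ Set.Ioo a b, cuspF x = 0 := by
  have := intermediate_value_Ioo hab (cuspF_cont.continuousOn)
  have h0 : (0 : ℝ) ∈ Set.Ioo (cuspF a) (cuspF b) := ⟨ha, hb⟩
  obtain ⟨x, hx, hx0⟩ := this h0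
  exact ⟨x, hx, hx0⟩

private lemma cusp_ivt_down {a b : ℝ} (hab : a ≤ b) (ha : 0 < cuspF a) (hb : cuspF b < 0) :
    ∃ x ∈ Set.Ioo a b, cuspF x = 0 := by
  have := intermediate_value_Ioo' hab (cuspF_cont.continuousOn)
  have h0 : (0 : ℝ) ∈ Set.Ioo (cuspF b) (cuspF a) := ⟨hb, ha⟩
  obtain ⟨x, hx, hx0⟩ := this h0
  exact ⟨x, hx, hx0⟩

theorem cusp_polynomial_five_real_roots :
    ∃ a b c d e : ℝ, a ≠ b ∧ a ≠ c ∧ a ≠ d ∧ a ≠ e ∧ b ≠ c ∧ b ≠ d ∧ b ≠ e ∧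
      c ≠ d ∧ c ≠ e ∧ d ≠ e ∧
      (∀ x ∈ ({a, b, c, d, e} : Set ℝ),
        x ^ 5 + 11 * x ^ 4 + 33 * x ^ 3 - 121 * x - 121 = 0) := by
  obtain ⟨a, ⟨ha1, ha2⟩, hfa⟩ := cusp_ivt_up (a := -6) (b := -5) (by norm_num)
    (by unfold cuspF; norm_num) (by unfold cuspF; norm_num)
  obtain ⟨b, ⟨hb1, hb2⟩, hfb⟩ := cusp_ivt_down (a := -4) (b := -3) (by norm_num)
    (by unfold cuspF; norm_num) (by unfold cuspF; norm_num)
  obtain ⟨c, ⟨hc1, hc2⟩, hfc⟩ := cusp_ivt_up (a := -3) (b := -2) (by norm_num)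
    (by unfold cuspF; norm_num) (by unfold cuspF; norm_num)
  obtain ⟨d, ⟨hd1, hd2⟩, hfd⟩ := cusp_ivt_down (a := -2) (b := -1) (by norm_num)
    (by unfold cuspF; norm_num) (by unfold cuspF; norm_num)
  obtain ⟨e, ⟨he1, he2⟩, hfe⟩ := cusp_ivt_up (a := 0) (b := 2) (by norm_num)
    (by unfold cuspF; norm_num) (by unfold cuspF; norm_num)
  refine ⟨a, b, c, d, e, by linarith, by linarith, by linarith, by linarith,
    by linarith, by linarith, by linarith, by linarith, by linarith, by linarith, ?_⟩
  intro x hx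
  simp only [Set.mem_insert_iff, Set.mem_singleton_iff] at hx
  rcases hx with rfl | rfl | rfl | rfl | rfl <;>
    simpa [cuspF] using ‹cuspF _ = 0›
end

section
/- For every prime p and every rational point (x,y) on the curve Y^2 + 11Y = X^3 + 11X^2 + 33X with x ≠ 0, one has max(1, |x|_p) ≤ max(1, |y - 11/x|_p)^(2/3), where |·|_p is the p-adic absolute value. -/
section
variable (p : ℕ) [hp : Fact p.Prime]

private lemma padd_left {q r : ℚ} (h : padicNorm p r < padicNorm p q) :
    padicNorm p (q + r) = padicNorm p q := by
  rw [padicNorm.add_eq_max_of_ne (ne_of_gt h), max_eq_left h.le]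

private lemma pnorm_pow (q : ℚ) (n : ℕ) : padicNorm p (q ^ n) = padicNorm p q ^ n := by
  induction n with
  | zero => simp [padicNorm.one]
  | succ n ih => rw [pow_succ, pow_succ, padicNorm.mul, ih]

end

theorem padic_height_inequality (p : ℕ) (hp : p.Prime) (x y : ℚ) (hx : x ≠ 0)
    (heq : y ^ 2 + 11 * y = x ^ 3 + 11 * x ^ 2 + 33 * x) :
    ((max 1 (padicNorm p x) : ℚ) : ℝ) ≤
      ((max 1 (padicNorm p (y - 11 / x)) : ℚ) : ℝ) ^ ((2 : ℝ) / 3) := by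
  haveI : Fact p.Prime := ⟨hp⟩
  set a := padicNorm p x with ha
  have hb1 : (1:ℝ) ≤ ((max 1 (padicNorm p (y - 11 / x)) : ℚ) : ℝ) := by
    exact_mod_cast le_max_left 1 _
  have hrpow1 : (1:ℝ) ≤ ((max 1 (padicNorm p (y - 11 / x)) : ℚ) : ℝ) ^ ((2:ℝ)/3) := by
    calc (1:ℝ) = 1 ^ ((2:ℝ)/3) := (Real.one_rpow _).symm
    _ ≤ _ := Real.rpow_le_rpow zero_le_one hb1 (by norm_num)
  rcases le_or_gt a 1 with hle | hgt
  · rw [max_eq_left hle]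
    exact_mod_cast hrpow1
  -- main case: a > 1
  have ha0 : (0:ℚ) < a := lt_trans one_pos hgt
  have n11 : padicNorm p 11 ≤ 1 := by
    have := padicNorm.of_int (p := p) 11; exact_mod_cast this
  have n33 : padicNorm p 33 ≤ 1 := by
    have := padicNorm.of_int (p := p) 33; exact_mod_cast this
  -- norm of RHS of heq is a^3
  have hmid : padicNorm p (11 * x ^ 2 + 33 * x) < a ^ 3 := by
    have h1 : padicNorm p (11 * x ^ 2) ≤ a ^ 2 := by
      rw [padicNorm.mul, pnorm_pow]
      calc padicNorm p 11 * a ^ 2 ≤ 1 * a ^ 2 := by nlinarith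
      _ = a ^ 2 := one_mul _
    have h2 : padicNorm p (33 * x) ≤ a ^ 2 := by
      rw [padicNorm.mul]
      nlinarith
    have h3 : padicNorm p (11 * x ^ 2 + 33 * x) ≤ a ^ 2 :=
      le_trans padicNorm.nonarchimedean (max_le h1 h2)
    have hcube : a ^ 2 < a ^ 3 := by nlinarith [mul_pos ha0 ha0]
    linarith
  have hRHS : padicNorm p (x ^ 3 + 11 * x ^ 2 + 33 * x) = a ^ 3 := by
    have : x ^ 3 + 11 * x ^ 2 + 33 * x = x ^ 3 + (11 * x ^ 2 + 33 * x) := by ring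
    rw [this, padd_left p (by rw [pnorm_pow]; exact hmid), pnorm_pow]
  have hLHS : padicNorm p (y ^ 2 + 11 * y) = a ^ 3 := by rw [heq]; exact hRHS
  set b := padicNorm p y with hb
  have hby : 1 < b := by
    by_contra hle
    push_neg at hle
    have hb0 : 0 ≤ b := padicNorm.nonneg y
    have h1 : padicNorm p (y ^ 2) ≤ 1 := by rw [pnorm_pow]; nlinarith
    have h2 : padicNorm p (11 * y) ≤ 1 := by rw [padicNorm.mul]; nlinarith
    have h3 : padicNorm p (y ^ 2 + 11 * y) ≤ 1 :=
      le_trans padicNorm.nonarchimedean (max_le h1 h2)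
    have hcube : (1:ℚ) < a ^ 3 := by nlinarith [mul_pos ha0 ha0]
    linarith
  have hb2 : b ^ 2 = a ^ 3 := by
    have h2 : padicNorm p (11 * y) < b ^ 2 := by
      rw [padicNorm.mul]; nlinarith
    have := hLHS
    rwa [show y ^ 2 + 11 * y = y ^ 2 + 11 * y from rfl,
      padd_left p (by rw [pnorm_pow]; exact h2), pnorm_pow] at this
  have hsub : padicNorm p (y - 11 / x) = b := by
    have hdiv : padicNorm p (-(11 / x)) < b := by
      rw [padicNorm.neg, padicNorm.div]
      have : padicNorm p 11 / a ≤ 1 := by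
        rw [div_le_one ha0]; linarith
      linarith
    rw [sub_eq_add_neg, padd_left p hdiv]
  have hmax : max 1 (padicNorm p (y - 11 / x)) = b := by
    rw [hsub, max_eq_right hby.le]
  rw [hmax, max_eq_right hgt.le]
  -- real computation
  have hbR : (0:ℝ) ≤ (b : ℝ) := by exact_mod_cast (padicNorm.nonneg y)
  have hb2R : ((b:ℝ)) ^ (2:ℕ) = ((a:ℝ)) ^ (3:ℕ) := by exact_mod_cast congrArg (Rat.cast (K := ℝ)) hb2
  have haR : (0:ℝ) ≤ (a:ℝ) := by exact_mod_cast ha0.le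
  have key : ((b:ℝ)) ^ ((2:ℝ)/3) = (a:ℝ) := by
    rw [show (2:ℝ)/3 = (2:ℕ) * ((1:ℝ)/3) by norm_num, Real.rpow_mul hbR,
      Real.rpow_natCast, hb2R, ← Real.rpow_natCast (a:ℝ) 3, ← Real.rpow_mul haR]
    norm_num
  exact key.ge
end

section
/- For every real point (x,y) on the curve Y^2 + 11Y = X^3 + 11X^2 + 33X with x ≠ 0, one has max(1, |x|) ≤ 7 · max(1, |y - 11/x|)^(2/3). -/
theorem archimedean_height_inequality (x y : ℝ) (hx : x ≠ 0)
    (heq : y ^ 2 + 11 * y = x ^ 3 + 11 * x ^ 2 + 33 * x) :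
    max 1 |x| ≤ 7 * max 1 |y - 11 / x| ^ ((2 : ℝ) / 3) := by
  set M : ℝ := max 1 |y - 11 / x| with hM
  have hM1 : (1 : ℝ) ≤ M := le_max_left _ _
  have hM0 : (0 : ℝ) < M := lt_of_lt_of_le one_pos hM1
  have hr1 : (1 : ℝ) ≤ M ^ ((2 : ℝ) / 3) :=
    Real.one_le_rpow hM1 (by norm_num)
  by_cases h7 : |x| ≤ 7
  · calc max 1 |x| ≤ 7 := max_le (by norm_num) h7
      _ ≤ 7 * M ^ ((2 : ℝ) / 3) := by nlinarith
  · push_neg at h7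
    have hx7 : 7 < x := by
      rcases lt_or_ge x 0 with hneg | hpos
      · exfalso
        have hxlt : x < -7 := by
          rw [abs_of_neg hneg] at h7; linarith
        nlinarith [sq_nonneg (2 * y + 11), sq_nonneg (x + 7), sq_nonneg x]
      · rwa [abs_of_nonneg hpos] at h7
    have hx0 : (0 : ℝ) < x := by linarith
    -- key inequality : 49 * (x*y - 11)^2 ≥ x^5
    have key : x ^ 5 ≤ 49 * (x * y - 11) ^ 2 := by
      rcases lt_or_ge y 0 with hy | hy
      · nlinarith [sq_nonneg (x * y), mul_pos hx0 hx0, sq_nonneg x,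
          mul_nonneg (mul_nonneg hx0.le hx0.le) (neg_nonneg.mpr hy.le)]
      · nlinarith [sq_nonneg (96 * y - 165), sq_nonneg x, sq_nonneg (x - 7),
          mul_nonneg (mul_nonneg hx0.le hx0.le) hy,
          mul_nonneg (mul_nonneg (mul_nonneg hx0.le hx0.le) hx0.le) hy,
          mul_nonneg hx0.le hy, sq_nonneg (x * y)]
    -- hence 49 * (y - 11/x)^2 ≥ x^3
    have key2 : x ^ 3 ≤ 49 * (y - 11 / x) ^ 2 := by
      have h1 : (y - 11 / x) ^ 2 = (x * y - 11) ^ 2 / x ^ 2 := by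
        field_simp
      rw [h1, ← mul_div_assoc, le_div_iff₀ (by positivity)]
      nlinarith [key]
    have hMx : |y - 11 / x| ≤ M := le_max_right _ _
    have hsq : (y - 11 / x) ^ 2 ≤ M ^ 2 := by
      have := sq_abs (y - 11 / x)
      nlinarith [abs_nonneg (y - 11 / x)]
    have hcube : x ^ 3 ≤ 343 * M ^ 2 := by nlinarith
    have hmax : max 1 |x| = x := by
      rw [abs_of_pos hx0]; exact max_eq_right (by linarith)
    rw [hmax]
    have hrpow : (7 * M ^ ((2 : ℝ) / 3)) ^ 3 = 343 * M ^ 2 := by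
      rw [mul_pow]
      have : (M ^ ((2 : ℝ) / 3)) ^ (3 : ℕ) = M ^ (2 : ℕ) := by
        rw [← Real.rpow_natCast (M ^ ((2 : ℝ) / 3)) 3,
          ← Real.rpow_mul hM0.le]
        norm_num
      rw [this]; norm_num
    have h3 : x ^ 3 ≤ (7 * M ^ ((2 : ℝ) / 3)) ^ 3 := by
      rw [hrpow]; exact hcube
    exact le_of_pow_le_pow_left₀ (by norm_num) (by positivity) h3
end

section
/- For every real number x > 7 and every real y with y^2 + 11y = x^3 + 11x^2 + 33x, one has |y - 11/x| ≥ (x/7)^(3/2). -/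
theorem real_place_lower_bound (x y : ℝ) (hx : x > 7)
    (heq : y ^ 2 + 11 * y = x ^ 3 + 11 * x ^ 2 + 33 * x) :
    |y - 11 / x| ≥ (x / 7) ^ ((3 : ℝ) / 2) := by
  have hx0 : (0:ℝ) < x := by linarith
  have h7 : (0:ℝ) ≤ x / 7 := by positivity
  set s := Real.sqrt x with hs
  set t := Real.sqrt 7 with ht
  have hs2 : s ^ 2 = x := Real.sq_sqrt hx0.le
  have ht2 : t ^ 2 = 7 := Real.sq_sqrt (by norm_num)
  have hs0 : 0 ≤ s := Real.sqrt_nonneg x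
  have ht0 : 0 ≤ t := Real.sqrt_nonneg 7
  have htgt : (2:ℝ) < t := by nlinarith
  have hst : t < s := Real.sqrt_lt_sqrt (by norm_num) hx
  -- rewrite the rpow expression
  have hu : Real.sqrt (x / 7) = s / t := Real.sqrt_div hx0.le 7
  have hrw : (x / 7) ^ ((3:ℝ)/2) = (s / t) ^ 3 := by
    have h1 : ((x/7):ℝ) ^ ((3:ℝ)/2) = ((x/7) ^ (3:ℕ)) ^ ((1:ℝ)/2) := by
      rw [← Real.rpow_natCast (x/7) 3, ← Real.rpow_mul h7]; norm_num
    rw [h1, ← Real.sqrt_eq_rpow,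
      show (x/7) ^ (3:ℕ) = (Real.sqrt (x/7) ^ 3) ^ 2 by
        rw [show (Real.sqrt (x/7) ^ 3) ^ 2 = (Real.sqrt (x/7) ^ 2) ^ 3 by ring,
          Real.sq_sqrt h7],
      Real.sqrt_sq (by positivity), hu]
  rw [hrw, ge_iff_le]
  have ht3 : (0:ℝ) < t ^ 3 := by positivity
  have hdiv : (s / t) ^ 3 = s ^ 3 / t ^ 3 := div_pow s t 3
  have heq' : y ^ 2 + 11 * y = s ^ 6 + 11 * s ^ 4 + 33 * s ^ 2 := by
    rw [← hs2] at heq; linear_combination heq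
  -- key square inequality
  have key : (s ^ 3 + 11/2) ^ 2 ≤ (y + 11/2) ^ 2 := by
    nlinarith [heq', mul_nonneg (pow_nonneg hs0 3) (by linarith : (0:ℝ) ≤ s - 1), sq_nonneg s]
  have h11x : 11 / x < 2 := by rw [div_lt_iff₀ hx0]; linarith
  have h11x0 : 0 < 11 / x := by positivity
  have hts3 : t ^ 3 < s ^ 3 := pow_lt_pow_left₀ hst ht0 (by norm_num)
  have h2t3 : (2:ℝ) ^ 3 < t ^ 3 := pow_lt_pow_left₀ htgt (by norm_num) (by norm_num)
  rcases le_or_gt (s ^ 3 + 11/2) (y + 11/2) with h | h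
  · -- y ≥ s^3
    rw [le_abs]
    left
    rw [hdiv, div_le_iff₀ ht3]
    nlinarith [hts3, h2t3]
  · -- y + 11/2 ≤ -(s^3 + 11/2)
    have hneg : y + 11/2 ≤ -(s ^ 3 + 11/2) := by nlinarith [key]
    rw [le_abs]
    right
    rw [hdiv, div_le_iff₀ ht3]
    have h1 : s ^ 3 ≤ s ^ 3 * t ^ 3 :=
      le_mul_of_one_le_right (pow_nonneg hs0 3) (by linarith : (1:ℝ) ≤ t ^ 3)
    have h3 : s ^ 3 * t ^ 3 ≤ (-(y - 11 / x)) * t ^ 3 :=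
      mul_le_mul_of_nonneg_right (by linarith) ht3.le
    linarith
end

section
/- Let (x,y) be a rational point on E: Y^2 + 11Y = X^3 + 11X^2 + 33X such that 11 divides the numerator of xy (i.e., xy - 11 has 11-adic valuation ≥ 1 and x, y are 11-integral). Then 11 divides both x and y (11-adically), and the 11-adic valuation of xy - 11 is exactly 1. -/
theorem eleven_adic_valuation_exactly_one (x y : ℚ)
    (hx : padicNorm 11 x ≤ 1) (hy : padicNorm 11 y ≤ 1)
    (heq : y ^ 2 + 11 * y = x ^ 3 + 11 * x ^ 2 + 33 * x)
    (h11 : padicNorm 11 (x * y - 11) < 1) :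
    padicNorm 11 x < 1 ∧ padicNorm 11 y < 1 ∧
      padicNorm 11 (x * y - 11) = 1 / 11 := by
  haveI : Fact (Nat.Prime 11) := ⟨by norm_num⟩
  set X : ℤ_[11] := ⟨(x : ℚ_[11]), by
    rw [Padic.eq_padicNorm]; exact_mod_cast hx⟩ with hXdef
  set Y : ℤ_[11] := ⟨(y : ℚ_[11]), by
    rw [Padic.eq_padicNorm]; exact_mod_cast hy⟩ with hYdef
  have hXc : (X : ℚ_[11]) = (x : ℚ_[11]) := rfl
  have hYc : (Y : ℚ_[11]) = (y : ℚ_[11]) := rfl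
  have hXn : ‖X‖ = ((padicNorm 11 x : ℚ) : ℝ) := by
    rw [PadicInt.norm_def, hXc, Padic.eq_padicNorm]
  have hYn : ‖Y‖ = ((padicNorm 11 y : ℚ) : ℝ) := by
    rw [PadicInt.norm_def, hYc, Padic.eq_padicNorm]
  have hZc : ((X * Y - 11 : ℤ_[11]) : ℚ_[11]) = ((x * y - 11 : ℚ) : ℚ_[11]) := by
    push_cast [hXc, hYc]; norm_cast
  have hZn : ‖X * Y - 11‖ = ((padicNorm 11 (x * y - 11) : ℚ) : ℝ) := by
    rw [PadicInt.norm_def, hZc, Padic.eq_padicNorm]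
  -- equation in ℤ_[11]
  have h0 : ((y ^ 2 + 11 * y : ℚ) : ℚ_[11]) = ((x ^ 3 + 11 * x ^ 2 + 33 * x : ℚ) : ℚ_[11]) := by
    rw [heq]
  have heqZ : Y ^ 2 + 11 * Y = X ^ 3 + 11 * X ^ 2 + 33 * X := by
    apply Subtype.ext
    push_cast [hXc, hYc] at h0 ⊢
    exact h0
  have hcast : ((11 : ℕ) : ℤ_[11]) = (11 : ℤ_[11]) := by norm_cast
  have hdvd11 : (11 : ℤ_[11]) ∣ X * Y - 11 := by
    have h1 : ‖X * Y - 11‖ < 1 := by rw [hZn]; exact_mod_cast h11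
    have h2 := (PadicInt.norm_lt_one_iff_dvd (X * Y - 11)).mp h1
    rwa [hcast] at h2
  have hdvdXY : (11 : ℤ_[11]) ∣ X * Y := by
    have := dvd_add hdvd11 (dvd_refl (11 : ℤ_[11]))
    simpa using this
  have hp : Prime (11 : ℤ_[11]) := by
    have := PadicInt.prime_p (p := 11)
    rwa [hcast] at this
  have hboth : (11 : ℤ_[11]) ∣ X ∧ (11 : ℤ_[11]) ∣ Y := by
    rcases hp.dvd_mul.mp hdvdXY with h | h
    · refine ⟨h, ?_⟩
      refine hp.dvd_of_dvd_pow (n := 2) ?_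
      obtain ⟨a, ha⟩ := h
      have h1 : (11 : ℤ_[11]) ∣ Y ^ 2 + 11 * Y := by
        rw [heqZ, ha]; exact ⟨a * (11 * a) ^ 2 + (11 * a) ^ 2 + 3 * (11 * a), by ring⟩
      have h2 : (11 : ℤ_[11]) ∣ 11 * Y := ⟨Y, rfl⟩
      have := dvd_sub h1 h2
      simpa using this
    · refine ⟨?_, h⟩
      refine hp.dvd_of_dvd_pow (n := 3) ?_
      obtain ⟨b, hb⟩ := h
      have h1 : (11 : ℤ_[11]) ∣ Y ^ 2 + 11 * Y := by
        rw [hb]; exact ⟨11 * b ^ 2 + 11 * b, by ring⟩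
      rw [heqZ] at h1
      have h2 : (11 : ℤ_[11]) ∣ 11 * X ^ 2 + 33 * X := ⟨X ^ 2 + 3 * X, by ring⟩
      have := dvd_sub h1 h2
      have h3 : X ^ 3 + 11 * X ^ 2 + 33 * X - (11 * X ^ 2 + 33 * X) = X ^ 3 := by ring
      rwa [h3] at this
  obtain ⟨⟨a, ha⟩, ⟨b, hb⟩⟩ := hboth
  have h11n : ‖(11 : ℤ_[11])‖ = (11 : ℝ)⁻¹ := by
    have := PadicInt.norm_p (p := 11)
    rw [hcast] at this
    simpa using this
  have hxlt : padicNorm 11 x < 1 := by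
    have h1 : ‖X‖ < 1 := (PadicInt.norm_lt_one_iff_dvd X).mpr (by rw [hcast]; exact ⟨a, ha⟩)
    rw [hXn] at h1; exact_mod_cast h1
  have hylt : padicNorm 11 y < 1 := by
    have h1 : ‖Y‖ < 1 := (PadicInt.norm_lt_one_iff_dvd Y).mpr (by rw [hcast]; exact ⟨b, hb⟩)
    rw [hYn] at h1; exact_mod_cast h1
  refine ⟨hxlt, hylt, ?_⟩
  have hfac : X * Y - 11 = 11 * (11 * (a * b) - 1) := by rw [ha, hb]; ring
  have h1 : ‖(11 : ℤ_[11]) * (a * b)‖ < 1 := by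
    calc ‖(11 : ℤ_[11]) * (a * b)‖ = ‖(11 : ℤ_[11])‖ * ‖a * b‖ := norm_mul _ _
      _ ≤ ‖(11 : ℤ_[11])‖ * 1 :=
          mul_le_mul_of_nonneg_left (PadicInt.norm_le_one _) (norm_nonneg _)
      _ < 1 := by rw [mul_one, h11n]; norm_num
  have habn : ‖11 * (a * b) - 1‖ = 1 := by
    have hne : ‖(11 : ℤ_[11]) * (a * b)‖ ≠ ‖(-1 : ℤ_[11])‖ := by
      rw [norm_neg, norm_one]; exact ne_of_lt h1
    calc ‖11 * (a * b) - 1‖ = ‖(11 : ℤ_[11]) * (a * b) + (-1)‖ := by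
          rw [sub_eq_add_neg]
      _ = max ‖(11 : ℤ_[11]) * (a * b)‖ ‖(-1 : ℤ_[11])‖ := PadicInt.norm_add_eq_max_of_ne hne
      _ = 1 := by rw [norm_neg, norm_one]; exact max_eq_right (le_of_lt h1)
  have hfin : ‖X * Y - 11‖ = (11 : ℝ)⁻¹ := by
    rw [hfac, norm_mul, habn, mul_one, h11n]
  rw [hZn] at hfin
  have : (padicNorm 11 (x * y - 11) : ℝ) = ((1 / 11 : ℚ) : ℝ) := by
    rw [hfin]; norm_num
  exact_mod_cast this
end

section
/- The point P_0 = (0,0) on the elliptic curve E: Y^2 + 11Y = X^3 + 11X^2 + 33X is not a torsion point; i.e., mP_0 is not the identity for any nonzero integer m. -/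
open WeierstrassCurve.Affine

private abbrev EC : WeierstrassCurve ℚ := WeierstrassCurve.mk 0 11 11 33 0

private lemma v2_two : padicValRat 2 (2:ℚ) = 1 := by
  simpa using padicValRat.self (p := 2) one_lt_two

private lemma v2_odd {n : ℤ} (h : ¬ (2:ℤ) ∣ n) : padicValRat 2 (n:ℚ) = 0 := by
  rw [padicValRat.of_int, padicValInt.eq_zero_of_not_dvd h]; simp

private lemma v2_11 : padicValRat 2 (11:ℚ) = 0 := by
  have := v2_odd (n := 11) (by decide); norm_num at this ⊢; exact this

private lemma v2_3 : padicValRat 2 (3:ℚ) = 0 := by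
  have := v2_odd (n := 3) (by decide); norm_num at this ⊢; exact this

private lemma v2_33 : padicValRat 2 (33:ℚ) = 0 := by
  have := v2_odd (n := 33) (by decide); norm_num at this ⊢; exact this

/-- ultrametric: if `v q < v r` (whenever `r ≠ 0`) and `q ≠ 0`, then `q + r ≠ 0` and
`v (q + r) = v q`. -/
private lemma v2_add_left {q r : ℚ} (hq : q ≠ 0)
    (hlt : r ≠ 0 → padicValRat 2 q < padicValRat 2 r) :
    q + r ≠ 0 ∧ padicValRat 2 (q + r) = padicValRat 2 q := by
  by_cases hr : r = 0
  · subst hr; simpa using hq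
  · have hv := hlt hr
    have hne : q + r ≠ 0 := by
      intro h0
      have hrq : r = -q := by linarith [h0]
      rw [hrq, padicValRat.neg] at hv
      exact lt_irrefl _ hv
    exact ⟨hne, padicValRat.add_eq_of_lt hne hq hr hv⟩

private lemma some_congr {W : WeierstrassCurve.Affine ℚ} {x₁ y₁ x₂ y₂ : ℚ}
    {h₁ : W.Nonsingular x₁ y₁} {h₂ : W.Nonsingular x₂ y₂} (hx : x₁ = x₂) (hy : y₁ = y₂) :
    Point.some _ _ h₁ = Point.some _ _ h₂ := by
  subst hx; subst hy; rfl

private lemma some_inj_x {W : WeierstrassCurve.Affine ℚ} {x₁ y₁ x₂ y₂ : ℚ}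
    {h₁ : W.Nonsingular x₁ y₁} {h₂ : W.Nonsingular x₂ y₂}
    (h : Point.some _ _ h₁ = Point.some _ _ h₂) : x₁ = x₂ := by
  injection h

/-- doubling step: valuations go from `(-(2k+2), -(3k+3))` to `(-(2k+4), -(3k+6))`. -/
private lemma EC_double {x y : ℚ} (h : EC.toAffine.Nonsingular x y) (k : ℕ)
    (hx : padicValRat 2 x = -(2 * (k:ℤ) + 2)) (hy : padicValRat 2 y = -(3 * (k:ℤ) + 3)) :
    ∃ (x' y' : ℚ) (h' : EC.toAffine.Nonsingular x' y'),
      Point.some _ _ h + Point.some _ _ h = Point.some _ _ h' ∧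
      padicValRat 2 x' = -(2 * ((k:ℤ)+1) + 2) ∧ padicValRat 2 y' = -(3 * ((k:ℤ)+1) + 3) := by
  have hx0 : x ≠ 0 := by
    intro h0; rw [h0, padicValRat.zero] at hx; omega
  have hy0 : y ≠ 0 := by
    intro h0; rw [h0, padicValRat.zero] at hy; omega
  -- the denominator 2y + 11
  have h2y : padicValRat 2 (2*y) = 1 + padicValRat 2 y := by
    rw [padicValRat.mul two_ne_zero hy0, v2_two]
  have hD := v2_add_left (q := 2*y) (r := (11:ℚ)) (mul_ne_zero two_ne_zero hy0)
    (fun _ => by rw [h2y, hy, v2_11]; omega)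
  have hDv : padicValRat 2 (2*y + 11) = -(3*(k:ℤ)+2) := by rw [hD.2, h2y, hy]; omega
  -- y is not the negation
  have hyne : y ≠ EC.toAffine.negY x y := by
    have hnegY : EC.toAffine.negY x y = -y - 11 := by
      simp [WeierstrassCurve.Affine.negY]
    rw [hnegY]
    intro heq
    exact hD.1 (by linarith [heq])
  -- the numerator 3x² + 22x + 33
  have h22x : padicValRat 2 (22*x) = 1 + padicValRat 2 x := by
    rw [show (22:ℚ)*x = 2*(11*x) by ring, padicValRat.mul two_ne_zero
      (mul_ne_zero (by norm_num) hx0), padicValRat.mul (by norm_num : (11:ℚ) ≠ 0) hx0, v2_two,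
      v2_11]
    ring
  have hBC := v2_add_left (q := 22*x) (r := (33:ℚ)) (mul_ne_zero (by norm_num) hx0)
    (fun _ => by rw [h22x, hx, v2_33]; omega)
  have h3x2 : padicValRat 2 (3*x^2) = 2 * padicValRat 2 x := by
    rw [padicValRat.mul (by norm_num : (3:ℚ) ≠ 0) (pow_ne_zero 2 hx0), v2_3,
      padicValRat.pow _]
    ring
  have hN := v2_add_left (q := 3*x^2) (r := 22*x + 33)
    (mul_ne_zero (by norm_num) (pow_ne_zero 2 hx0))
    (fun _ => by rw [h3x2, hx, hBC.2, h22x, hx]; omega)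
  have hNv : padicValRat 2 (3*x^2 + (22*x + 33)) = -(4*(k:ℤ)+4) := by
    rw [hN.2, h3x2, hx]; omega
  -- the slope
  have hL : EC.toAffine.slope x x y y = (3*x^2 + (22*x + 33)) / (2*y + 11) := by
    rw [slope_of_Y_ne rfl hyne]
    have hden : y - EC.toAffine.negY x y = 2*y + 11 := by
      simp [WeierstrassCurve.Affine.negY]; ring
    rw [hden]
    norm_num
    ring
  have hLne : (3*x^2 + (22*x + 33)) / (2*y + 11) ≠ 0 := div_ne_zero hN.1 hD.1
  have hLv : padicValRat 2 ((3*x^2 + (22*x + 33)) / (2*y + 11)) = -((k:ℤ)+2) := by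
    rw [padicValRat.div hN.1 hD.1, hNv, hDv]; omega
  -- the x-coordinate of the double
  have hx'eq : EC.toAffine.addX x x (EC.toAffine.slope x x y y)
      = ((3*x^2 + (22*x + 33)) / (2*y + 11))^2 + (-(2*x) + -11) := by
    rw [hL]; simp [WeierstrassCurve.Affine.addX]; ring
  have h2x : padicValRat 2 (-(2*x)) = 1 + padicValRat 2 x := by
    rw [padicValRat.neg, padicValRat.mul two_ne_zero hx0, v2_two]
  have hS := v2_add_left (q := -(2*x)) (r := (-11:ℚ)) (neg_ne_zero.2 (mul_ne_zero two_ne_zero hx0))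
    (fun _ => by
      rw [h2x, hx, show ((-11:ℚ)) = -(11:ℚ) by norm_num, padicValRat.neg, v2_11]; omega)
  have hX := v2_add_left (q := ((3*x^2 + (22*x + 33)) / (2*y + 11))^2) (r := -(2*x) + -11)
    (pow_ne_zero 2 hLne)
    (fun _ => by rw [padicValRat.pow _, hLv, hS.2, h2x, hx]; omega)
  have hXv : padicValRat 2 (((3*x^2 + (22*x + 33)) / (2*y + 11))^2 + (-(2*x) + -11))
      = -(2*(k:ℤ)+4) := by
    rw [hX.2, padicValRat.pow _, hLv]; omega
  -- the y-coordinate of the double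
  have hy'eq : EC.toAffine.addY x x y (EC.toAffine.slope x x y y)
      = -(((3*x^2 + (22*x + 33)) / (2*y + 11)) *
            ((((3*x^2 + (22*x + 33)) / (2*y + 11))^2 + (-(2*x) + -11)) + -x))
        + (-y + -11) := by
    have := hx'eq
    rw [WeierstrassCurve.Affine.addY, WeierstrassCurve.Affine.negAddY, this, hL,
      WeierstrassCurve.Affine.negY]
    simp
    ring
  have hsub := v2_add_left (q := ((3*x^2 + (22*x + 33)) / (2*y + 11))^2 + (-(2*x) + -11))
    (r := -x) hX.1
    (fun _ => by rw [hXv, padicValRat.neg, hx]; omega)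
  have hprod : padicValRat 2 (((3*x^2 + (22*x + 33)) / (2*y + 11)) *
      ((((3*x^2 + (22*x + 33)) / (2*y + 11))^2 + (-(2*x) + -11)) + -x)) = -(3*(k:ℤ)+6) := by
    rw [padicValRat.mul hLne hsub.1, hLv, hsub.2, hXv]; omega
  have hprodne : (((3*x^2 + (22*x + 33)) / (2*y + 11)) *
      ((((3*x^2 + (22*x + 33)) / (2*y + 11))^2 + (-(2*x) + -11)) + -x)) ≠ 0 :=
    mul_ne_zero hLne hsub.1
  have hmy := v2_add_left (q := -y) (r := (-11:ℚ)) (neg_ne_zero.2 hy0)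
    (fun _ => by
      rw [padicValRat.neg, hy, show ((-11:ℚ)) = -(11:ℚ) by norm_num, padicValRat.neg, v2_11]
      omega)
  have hY := v2_add_left (q := -(((3*x^2 + (22*x + 33)) / (2*y + 11)) *
      ((((3*x^2 + (22*x + 33)) / (2*y + 11))^2 + (-(2*x) + -11)) + -x)))
    (r := -y + -11) (neg_ne_zero.2 hprodne)
    (fun _ => by rw [padicValRat.neg, hprod, hmy.2, padicValRat.neg, hy]; omega)
  refine ⟨_, _, nonsingular_add h h (fun hh => hyne hh.2), Point.add_self_of_Y_ne hyne, ?_, ?_⟩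
  · rw [hx'eq, hXv]; omega
  · rw [hy'eq, hY.2, padicValRat.neg, hprod]; omega

private lemma EC_three (h0 : EC.toAffine.Nonsingular 0 0) :
    ∃ h3 : EC.toAffine.Nonsingular (-11/4) (-33/8),
      (3:ℤ) • (Point.some _ _ h0 : EC.toAffine.Point) = Point.some _ _ h3 := by
  have h2 : EC.toAffine.Nonsingular (-2) (-5) := by
    simp [WeierstrassCurve.Affine.nonsingular_iff, WeierstrassCurve.Affine.equation_iff]
    norm_num
  have h3 : EC.toAffine.Nonsingular (-11/4) (-33/8) := by
    simp [WeierstrassCurve.Affine.nonsingular_iff, WeierstrassCurve.Affine.equation_iff]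
    norm_num
  have hyne0 : (0:ℚ) ≠ EC.toAffine.negY 0 0 := by
    norm_num [WeierstrassCurve.Affine.negY]
  have hslope0 : EC.toAffine.slope 0 0 0 0 = 3 := by
    rw [slope_of_Y_ne rfl hyne0]
    norm_num [WeierstrassCurve.Affine.negY]
  have e1 : Point.some _ _ h0 + Point.some _ _ h0 = Point.some _ _ h2 := by
    rw [Point.add_self_of_Y_ne hyne0]
    apply some_congr
    · rw [hslope0]; norm_num [WeierstrassCurve.Affine.addX]
    · rw [hslope0]
      norm_num [WeierstrassCurve.Affine.addY, WeierstrassCurve.Affine.negAddY,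
        WeierstrassCurve.Affine.addX, WeierstrassCurve.Affine.negY]
  have hxne : (-2 : ℚ) ≠ 0 := by norm_num
  have hslope1 : EC.toAffine.slope (-2) 0 (-5) 0 = 5/2 := by
    rw [slope_of_X_ne hxne]; norm_num
  have e2 : Point.some _ _ h2 + Point.some _ _ h0 = Point.some _ _ h3 := by
    rw [Point.add_of_X_ne hxne]
    apply some_congr
    · rw [hslope1]; norm_num [WeierstrassCurve.Affine.addX]
    · rw [hslope1]
      norm_num [WeierstrassCurve.Affine.addY, WeierstrassCurve.Affine.negAddY,
        WeierstrassCurve.Affine.addX, WeierstrassCurve.Affine.negY]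
  refine ⟨h3, ?_⟩
  rw [show (3:ℤ) = 2 + 1 by norm_num, add_zsmul, two_zsmul, one_zsmul, e1, e2]

private lemma v2_base_x : padicValRat 2 (-11/4 : ℚ) = -2 := by
  rw [show (-11/4 : ℚ) = (-11)/4 by norm_num,
    padicValRat.div (by norm_num) (by norm_num),
    show ((-11:ℚ)) = -(11:ℚ) by norm_num, padicValRat.neg, v2_11,
    show ((4:ℚ)) = (2:ℚ)^2 by norm_num, padicValRat.pow _, v2_two]
  ring

private lemma v2_base_y : padicValRat 2 (-33/8 : ℚ) = -3 := by
  rw [show (-33/8 : ℚ) = (-33)/8 by norm_num,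
    padicValRat.div (by norm_num) (by norm_num),
    show ((-33:ℚ)) = -(33:ℚ) by norm_num, padicValRat.neg, v2_33,
    show ((8:ℚ)) = (2:ℚ)^3 by norm_num, padicValRat.pow _, v2_two]
  ring

private lemma EC_key (h0 : EC.toAffine.Nonsingular 0 0) (k : ℕ) :
    ∃ (x y : ℚ) (h : EC.toAffine.Nonsingular x y),
      ((3 * 2^k : ℤ)) • (Point.some _ _ h0 : EC.toAffine.Point) = Point.some _ _ h ∧
      padicValRat 2 x = -(2 * (k:ℤ) + 2) ∧ padicValRat 2 y = -(3 * (k:ℤ) + 3) := by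
  induction k with
  | zero =>
    obtain ⟨h3, e⟩ := EC_three h0
    refine ⟨-11/4, -33/8, h3, ?_, by rw [v2_base_x]; norm_num, by rw [v2_base_y]; norm_num⟩
    simpa using e
  | succ k ih =>
    obtain ⟨x, y, h, he, hvx, hvy⟩ := ih
    obtain ⟨x', y', h', he', hvx', hvy'⟩ := EC_double h k hvx hvy
    refine ⟨x', y', h', ?_, by rw [hvx']; push_cast; ring, by rw [hvy']; push_cast; ring⟩
    rw [show (3 * 2^(k+1) : ℤ) = 2 * (3 * 2^k) by ring, mul_smul, he, two_zsmul, he']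

theorem generator_not_torsion
    (W : WeierstrassCurve ℚ) (hW : W = WeierstrassCurve.mk 0 11 11 33 0)
    (h0 : W.toAffine.Nonsingular 0 0) :
    ∀ m : ℤ, m ≠ 0 → m • Point.some _ _ h0 ≠ 0 := by
  subst hW
  intro m hm hP
  set P : EC.toAffine.Point := Point.some _ _ h0 with hPdef
  set n := m.natAbs with hndef
  have hn0 : 0 < n := Int.natAbs_pos.2 hm
  have hnP : (n : ℤ) • P = 0 := by
    rcases Int.natAbs_eq m with h | h
    · rw [← h]; exact hP
    · rw [h, neg_smul, neg_eq_zero] at hP; exact hP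
  have hmod : ∀ a b : ℕ, a % n = b % n → (a:ℤ) • P = (b:ℤ) • P := by
    intro a b hab
    have ha : (a:ℤ) = ((a / n : ℕ) : ℤ) * n + ((a % n : ℕ) : ℤ) := by
      rw [show (a:ℤ) = ((a / n * n + a % n : ℕ) : ℤ) from by rw [Nat.div_add_mod']]
      push_cast; ring
    have hb : (b:ℤ) = ((b / n : ℕ) : ℤ) * n + ((b % n : ℕ) : ℤ) := by
      rw [show (b:ℤ) = ((b / n * n + b % n : ℕ) : ℤ) from by rw [Nat.div_add_mod']]
      push_cast; ring
    rw [ha, hb, hab, add_zsmul, add_zsmul, mul_zsmul, mul_zsmul, hnP, zsmul_zero, zsmul_zero]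
  obtain ⟨i, j, hij, hgij⟩ := Fintype.exists_ne_map_eq_of_card_lt
    (fun k : Fin (n+1) => (⟨(3 * 2^(k:ℕ)) % n, Nat.mod_lt _ hn0⟩ : Fin n)) (by simp)
  have heq : ((3 * 2^(i:ℕ) : ℤ)) • P = ((3 * 2^(j:ℕ) : ℤ)) • P := by
    have h1 := hmod (3 * 2^(i:ℕ)) (3 * 2^(j:ℕ)) (congrArg Fin.val hgij)
    have c1 : ((3 * 2^(i:ℕ) : ℕ) : ℤ) = (3 * 2^(i:ℕ) : ℤ) := by push_cast; ring
    have c2 : ((3 * 2^(j:ℕ) : ℕ) : ℤ) = (3 * 2^(j:ℕ) : ℤ) := by push_cast; ring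
    rwa [c1, c2] at h1
  obtain ⟨xi, yi, hi, hei, hvi, -⟩ := EC_key h0 (i:ℕ)
  obtain ⟨xj, yj, hj, hej, hvj, -⟩ := EC_key h0 (j:ℕ)
  rw [hei, hej] at heq
  have hxx : xi = xj := some_inj_x heq
  rw [hxx, hvj] at hvi
  have : (i:ℕ) = (j:ℕ) := by omega
  exact hij (Fin.ext this)
end
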